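/- For every ε > 0 there exist positive constants K₁ and K₂ such that for all λ > 1: K₁ (K+λ)^{2δ/σ²} / λ² ≤ (1/ω(λ)) exp{ ∫_1^λ φ(z)/ω(z) dz } ≤ K₂ (K+λ)^{2δ/σ² + ε} / λ². -/

import Mathlib

open MeasureTheory Set

lemma stmt8_exp_nonneg {x : ℝ} (hx : 0 ≤ x) : 0 ≤ 1 - Real.exp (-x) := by
  have : Real.exp (-x) ≤ Real.exp 0 := Real.exp_le_exp.mpr (by linarith)
  simp only [Real.exp_zero] at this; linarith

lemma stmt8_exp_le {x : ℝ} (hx : 0 ≤ x) : 1 - Real.exp (-x) ≤ min 1 x := by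
  have h1 : 0 < Real.exp (-x) := Real.exp_pos _
  have h2 : -x + 1 ≤ Real.exp (-x) := Real.add_one_le_exp (-x)
  exact le_min (by linarith) (by linarith)

lemma stmt8_min_le {z u : ℝ} (hz : 0 ≤ z) (hu : 0 ≤ u) :
    min 1 (z * u) ≤ max 1 z * min 1 u := by
  rcases le_total u 1 with h | h
  · rw [min_eq_right h]
    calc min 1 (z * u) ≤ z * u := min_le_right _ _
      _ ≤ max 1 z * u := mul_le_mul_of_nonneg_right (le_max_right _ _) hu
  · calc min 1 (z * u) ≤ 1 := min_le_left _ _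
      _ ≤ max 1 z := le_max_left _ _
      _ = max 1 z * min 1 u := by rw [min_eq_left h, mul_one]

set_option maxHeartbeats 1000000 in
/-- For every ε > 0 there exist positive constants K₁, K₂ such that for all λ > 1:
K₁(K+λ)^{2δ/σ²}/λ² ≤ (1/ω(λ)) exp{∫_1^λ φ(z)/ω(z) dz} ≤ K₂(K+λ)^{2δ/σ²+ε}/λ². -/
theorem stmt_8
    (μ : Measure ℝ) (δ c σ K : ℝ)
    (hμ0 : μ (Iic 0) = 0)
    (hμint : ∫⁻ u in Ioi (0:ℝ), ENNReal.ofReal (min 1 u) ∂μ < ⊤)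
    (hδ : 0 ≤ δ) (hc : 0 < c) (hσ : 0 < σ)
    (hK : K = 2 * c / σ ^ 2)
    (φ ω : ℝ → ℝ)
    (hφ : ∀ z, φ z = δ * z + ∫ u in Ioi (0:ℝ), (1 - Real.exp (-(z * u))) ∂μ)
    (hω : ∀ z, ω z = c * z + σ ^ 2 * z ^ 2 / 2)
    (ε : ℝ) (hε : 0 < ε) :
    ∃ K₁ K₂ : ℝ, 0 < K₁ ∧ 0 < K₂ ∧ ∀ lam : ℝ, 1 < lam →
      K₁ * (K + lam) ^ (2 * δ / σ ^ 2) / lam ^ 2 ≤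
        (1 / ω lam) * Real.exp (∫ z in (1:ℝ)..lam, φ z / ω z) ∧
      (1 / ω lam) * Real.exp (∫ z in (1:ℝ)..lam, φ z / ω z) ≤
        K₂ * (K + lam) ^ (2 * δ / σ ^ 2 + ε) / lam ^ 2 := by
  have hσ2 : (0:ℝ) < σ ^ 2 := by positivity
  have hK0 : 0 < K := by rw [hK]; positivity
  set ψ : ℝ → ℝ := fun z => ∫ u in Ioi (0:ℝ), (1 - Real.exp (-(z * u))) ∂μ with hψdef
  set M : ℝ := ∫ u in Ioi (0:ℝ), min 1 u ∂μ with hMdef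
  set A : ℝ := 2 * δ / σ ^ 2 with hA
  have hA0 : 0 ≤ A := by rw [hA]; positivity
  -- basic facts about ω
  have hωeq : ∀ z, ω z = σ ^ 2 / 2 * (z * (z + K)) := by
    intro z; rw [hω, hK]; field_simp; ring
  have hωpos : ∀ z : ℝ, 1 ≤ z → 0 < ω z := by
    intro z hz; rw [hωeq]; positivity
  -- integrability of min 1 u
  have hMint : Integrable (fun u => min 1 u) (μ.restrict (Ioi 0)) := by
    refine ⟨(continuous_const.min continuous_id).aestronglyMeasurable, ?_⟩
    have hcong : ∀ᵐ u ∂(μ.restrict (Ioi 0)),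
        ‖min 1 u‖ₑ = ENNReal.ofReal (min 1 u) := by
      filter_upwards [ae_restrict_mem measurableSet_Ioi] with u hu
      exact (Real.enorm_eq_ofReal (le_min zero_le_one (le_of_lt hu))).symm ▸ rfl
    rw [HasFiniteIntegral, lintegral_congr_ae hcong]
    exact hμint
  have hM0 : 0 ≤ M := by
    refine integral_nonneg_of_ae ?_
    filter_upwards [ae_restrict_mem measurableSet_Ioi] with u hu
    exact le_min zero_le_one (le_of_lt hu)
  -- integrability of the exponential integrand
  have hψint : ∀ z : ℝ, 0 ≤ z →
      Integrable (fun u => 1 - Real.exp (-(z * u))) (μ.restrict (Ioi 0)) := by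
    intro z hz
    refine (hMint.const_mul (max 1 z)).mono
      ((continuous_const.sub ((Real.continuous_exp.comp
        ((continuous_const.mul continuous_id).neg)))).aestronglyMeasurable) ?_
    filter_upwards [ae_restrict_mem measurableSet_Ioi] with u hu
    have h0 : 0 ≤ z * u := mul_nonneg hz (le_of_lt hu)
    rw [Real.norm_eq_abs, abs_of_nonneg (stmt8_exp_nonneg h0)]
    calc 1 - Real.exp (-(z * u)) ≤ min 1 (z * u) := stmt8_exp_le h0
      _ ≤ max 1 z * min 1 u := stmt8_min_le hz (le_of_lt hu)
      _ ≤ ‖max 1 z * min 1 u‖ := le_abs_self _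
  -- ψ is nonnegative
  have hψ0 : ∀ z : ℝ, 0 ≤ z → 0 ≤ ψ z := by
    intro z hz
    refine integral_nonneg_of_ae ?_
    filter_upwards [ae_restrict_mem measurableSet_Ioi] with u hu
    exact stmt8_exp_nonneg (mul_nonneg hz (le_of_lt hu))
  -- ψ z ≤ M * z for z ≥ 1
  have hψM : ∀ z : ℝ, 1 ≤ z → ψ z ≤ M * z := by
    intro z hz
    have hz0 : (0:ℝ) ≤ z := by linarith
    calc ψ z ≤ ∫ u in Ioi (0:ℝ), z * min 1 u ∂μ := by
          refine integral_mono_ae (hψint z hz0) (hMint.const_mul z) ?_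
          filter_upwards [ae_restrict_mem measurableSet_Ioi] with u hu
          calc 1 - Real.exp (-(z * u)) ≤ min 1 (z * u) :=
                stmt8_exp_le (mul_nonneg hz0 (le_of_lt hu))
            _ ≤ max 1 z * min 1 u := stmt8_min_le hz0 (le_of_lt hu)
            _ = z * min 1 u := by rw [max_eq_right hz]
      _ = z * M := integral_const_mul z _
      _ = M * z := mul_comm _ _
  -- ψ is monotone on [1, ∞)
  have hψmono : ∀ x y : ℝ, 1 ≤ x → x ≤ y → ψ x ≤ ψ y := by
    intro x y hx hxy
    refine integral_mono_ae (hψint x (by linarith)) (hψint y (by linarith)) ?_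
    filter_upwards [ae_restrict_mem measurableSet_Ioi] with u hu
    have h : Real.exp (-(y * u)) ≤ Real.exp (-(x * u)) := by
      apply Real.exp_le_exp.mpr
      have := mul_le_mul_of_nonneg_right hxy (le_of_lt hu)
      linarith
    linarith
  clear_value A M
  -- interval integrability of φ/ω
  have hII : ∀ a b : ℝ, 1 ≤ a → a ≤ b →
      IntervalIntegrable (fun z => φ z / ω z) volume a b := by
    intro a b ha hab
    have huI : uIcc a b = Icc a b := uIcc_of_le hab
    have hmono : MonotoneOn ψ (uIcc a b) := by
      rw [huI]; intro x hx y _ hxy; exact hψmono x y (le_trans ha hx.1) hxy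
    have hψII : IntervalIntegrable ψ volume a b := hmono.intervalIntegrable
    have hφII : IntervalIntegrable φ volume a b := by
      have hfe : φ = fun z => δ * z + ψ z := funext hφ
      rw [hfe]
      exact ((continuous_const.mul continuous_id).intervalIntegrable a b).add hψII
    have hcont : ContinuousOn (fun z => (ω z)⁻¹) (uIcc a b) := by
      have hωc : Continuous ω := by
        rw [show ω = fun z => c * z + σ ^ 2 * z ^ 2 / 2 from funext hω]
        exact (continuous_const.mul continuous_id).add
          ((continuous_const.mul (continuous_pow 2)).div_const 2)
      exact ContinuousOn.inv₀ hωc.continuousOn fun x hx => by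
        rw [huI] at hx; exact (hωpos x (le_trans ha hx.1)).ne'
    simpa only [div_eq_mul_inv] using hφII.mul_continuousOn hcont
  -- integral formula for C/(z+K)
  have hIform : ∀ a b C : ℝ, 1 ≤ a → a ≤ b →
      ∫ z in a..b, C / (z + K) = C * (Real.log (b + K) - Real.log (a + K)) := by
    intro a b C ha hab
    have haK : (0:ℝ) < a + K := by linarith
    have hbK : (0:ℝ) < b + K := by linarith
    have h0 : (0:ℝ) ∉ uIcc (a + K) (b + K) := by
      rw [uIcc_of_le (by linarith)]
      intro h
      exact absurd h.1 (by linarith)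
    calc ∫ z in a..b, C / (z + K) = ∫ z in a..b, C * (1 / (z + K)) := by
          simp only [mul_one_div]
      _ = C * ∫ z in a..b, 1 / (z + K) := intervalIntegral.integral_const_mul C _
      _ = C * ∫ x in (a + K)..(b + K), 1 / x :=
          by rw [intervalIntegral.integral_comp_add_right (fun x => 1 / x) K]
      _ = C * Real.log ((b + K) / (a + K)) := by rw [integral_one_div h0]
      _ = C * (Real.log (b + K) - Real.log (a + K)) := by
          rw [Real.log_div hbK.ne' haK.ne']
  -- pointwise bounds
  have hlow : ∀ z : ℝ, 1 ≤ z → A / (z + K) ≤ φ z / ω z := by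
    intro z hz
    have hz0 : (0:ℝ) < z := by linarith
    have hzK : (0:ℝ) < z + K := by linarith
    have he : δ * z / ω z = A / (z + K) := by
      rw [hωeq, hA]; field_simp
    rw [← he]
    refine div_le_div_of_nonneg_right ?_ (hωpos z hz).le |>.trans_eq rfl
    rw [hφ]
    have h' : (0:ℝ) ≤ ∫ u in Ioi (0:ℝ), (1 - Real.exp (-(z * u))) ∂μ :=
      hψ0 z (by linarith)
    linarith
  have hup : ∀ z D : ℝ, 1 ≤ z → ψ z ≤ D * z → φ z / ω z ≤ (A + 2 * D / σ ^ 2) / (z + K) := by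
    intro z D hz hD
    have hz0 : (0:ℝ) < z := by linarith
    have hzK : (0:ℝ) < z + K := by linarith
    have he : (δ + D) * z / ω z = (A + 2 * D / σ ^ 2) / (z + K) := by
      rw [hωeq, hA]; field_simp
    rw [← he]
    have hφz : φ z ≤ (δ + D) * z := by
      have hψz : ψ z ≤ D * z := hD
      rw [hφ]
      have : (∫ u in Ioi (0:ℝ), (1 - Real.exp (-(z * u))) ∂μ) ≤ D * z := hψz
      nlinarith
    exact div_le_div_of_nonneg_right hφz (hωpos z hz).le |>.trans_eq rfl
  -- the ε threshold
  have hψtend : Filter.Tendsto (fun z => ψ z / z) Filter.atTop (nhds 0) := by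
    have hDCT := MeasureTheory.tendsto_integral_filter_of_dominated_convergence
      (μ := μ.restrict (Ioi 0)) (F := fun (z : ℝ) u => (1 - Real.exp (-(z * u))) / z)
      (f := fun _ => (0:ℝ)) (bound := fun u => min 1 u) (l := Filter.atTop)
      (Filter.Eventually.of_forall fun z =>
        ((continuous_const.sub (Real.continuous_exp.comp
          ((continuous_const.mul continuous_id).neg))).div_const z).aestronglyMeasurable)
      ?_ hMint ?_
    · rw [integral_zero] at hDCT
      refine hDCT.congr fun z => ?_
      exact integral_div z _
    · filter_upwards [Filter.eventually_ge_atTop (1:ℝ)] with z hz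
      filter_upwards [ae_restrict_mem measurableSet_Ioi] with u hu
      have hz0 : (0:ℝ) < z := by linarith
      have h0 : 0 ≤ z * u := mul_nonneg hz0.le (le_of_lt hu)
      rw [Real.norm_eq_abs, abs_of_nonneg (div_nonneg (stmt8_exp_nonneg h0) hz0.le)]
      have h1 : 1 - Real.exp (-(z * u)) ≤ z * min 1 u := by
        calc 1 - Real.exp (-(z * u)) ≤ min 1 (z * u) := stmt8_exp_le h0
          _ ≤ max 1 z * min 1 u := stmt8_min_le hz0.le (le_of_lt hu)
          _ = z * min 1 u := by rw [max_eq_right hz]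
      calc (1 - Real.exp (-(z * u))) / z ≤ z * min 1 u / z :=
            div_le_div_of_nonneg_right h1 hz0.le |>.trans_eq rfl
        _ = min 1 u := by field_simp
    · filter_upwards [ae_restrict_mem measurableSet_Ioi] with u hu
      refine squeeze_zero' ?_ ?_ tendsto_inv_atTop_zero
      · filter_upwards [Filter.eventually_ge_atTop (1:ℝ)] with z hz
        exact div_nonneg (stmt8_exp_nonneg (mul_nonneg (by linarith) (le_of_lt hu)))
          (by linarith)
      · filter_upwards [Filter.eventually_ge_atTop (1:ℝ)] with z hz
        have hz0 : (0:ℝ) < z := by linarith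
        have h1 : 1 - Real.exp (-(z * u)) ≤ 1 := by
          have := Real.exp_pos (-(z * u)); linarith
        rw [inv_eq_one_div]
        exact div_le_div_of_nonneg_right h1 hz0.le |>.trans_eq rfl
  obtain ⟨Z, hZ2, hZ⟩ : ∃ Z : ℝ, 2 ≤ Z ∧ ∀ z : ℝ, Z ≤ z → ψ z ≤ (ε * σ ^ 2 / 2) * z := by
    have hev : ∀ᶠ z in Filter.atTop, ψ z / z ≤ ε * σ ^ 2 / 2 :=
      hψtend.eventually (eventually_le_nhds (by positivity))
    rw [Filter.eventually_atTop] at hev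
    obtain ⟨Z₀, hZ₀⟩ := hev
    refine ⟨max Z₀ 2, le_max_right _ _, fun z hz => ?_⟩
    have hz2 : (2:ℝ) ≤ z := le_trans (le_max_right _ _) hz
    have hz0 : (0:ℝ) < z := by linarith
    have := hZ₀ z (le_trans (le_max_left _ _) hz)
    calc ψ z = ψ z / z * z := by field_simp
      _ ≤ ε * σ ^ 2 / 2 * z := mul_le_mul_of_nonneg_right this hz0.le
  have hZ1 : (1:ℝ) ≤ Z := by linarith
  set B : ℝ := A + 2 * M / σ ^ 2 with hB
  clear_value B
  have hB0 : 0 ≤ B := by rw [hB]; exact add_nonneg hA0 (by positivity)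
  set C₁ : ℝ := B * (Real.log (Z + K) - Real.log (1 + K)) with hC₁
  clear_value C₁
  -- integral comparison: lower bound
  have hIlow : ∀ lam : ℝ, 1 < lam →
      A * (Real.log (lam + K) - Real.log (1 + K)) ≤ ∫ z in (1:ℝ)..lam, φ z / ω z := by
    intro lam hlam
    have hcont : IntervalIntegrable (fun z => A / (z + K)) volume 1 lam := by
      refine ContinuousOn.intervalIntegrable ?_
      refine continuousOn_const.div ((continuous_id.add continuous_const).continuousOn) ?_
      intro x hx
      rw [uIcc_of_le hlam.le] at hx
      have : (1:ℝ) ≤ x := hx.1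
      positivity
    rw [← hIform 1 lam A le_rfl hlam.le]
    exact intervalIntegral.integral_mono_on hlam.le hcont (hII 1 lam le_rfl hlam.le)
      fun x hx => hlow x hx.1
  -- integral comparison: upper bound
  have hIup : ∀ lam : ℝ, 1 < lam →
      (∫ z in (1:ℝ)..lam, φ z / ω z) ≤ C₁ + (A + ε) * (Real.log (lam + K) - Real.log (1 + K)) := by
    intro lam hlam
    have hBint : ∀ a b C : ℝ, 1 ≤ a → a ≤ b →
        IntervalIntegrable (fun z => C / (z + K)) volume a b := by
      intro a b C ha hab
      refine ContinuousOn.intervalIntegrable ?_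
      refine continuousOn_const.div ((continuous_id.add continuous_const).continuousOn) ?_
      intro x hx
      rw [uIcc_of_le hab] at hx
      have : a ≤ x := hx.1
      have : (1:ℝ) ≤ x := by linarith
      positivity
    have hAε : A + 2 * (ε * σ ^ 2 / 2) / σ ^ 2 = A + ε := by field_simp
    have hlog1 : Real.log (1 + K) ≤ Real.log (lam + K) :=
      Real.log_le_log (by linarith) (by linarith)
    rcases le_or_gt lam Z with hcase | hcase
    · have h1 : (∫ z in (1:ℝ)..lam, φ z / ω z) ≤ ∫ z in (1:ℝ)..lam, B / (z + K) := by
        refine intervalIntegral.integral_mono_on hlam.le (hII 1 lam le_rfl hlam.le)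
          (hBint 1 lam B le_rfl hlam.le) fun x hx => ?_
        have := hup x M hx.1 (hψM x hx.1)
        rwa [hB]
      have h2 : Real.log (lam + K) ≤ Real.log (Z + K) :=
        Real.log_le_log (by linarith) (by linarith)
      rw [hIform 1 lam B le_rfl hlam.le] at h1
      have h3 : B * (Real.log (lam + K) - Real.log (1 + K)) ≤ C₁ := by
        rw [hC₁]
        exact mul_le_mul_of_nonneg_left (by linarith) hB0
      have h4 : 0 ≤ (A + ε) * (Real.log (lam + K) - Real.log (1 + K)) :=
        mul_nonneg (by linarith) (by linarith)
      linarith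
    · have hsplit : (∫ z in (1:ℝ)..Z, φ z / ω z) + ∫ z in Z..lam, φ z / ω z
          = ∫ z in (1:ℝ)..lam, φ z / ω z :=
        intervalIntegral.integral_add_adjacent_intervals (hII 1 Z le_rfl hZ1)
          (hII Z lam hZ1 hcase.le)
      rw [← hsplit]
      have e1 : (∫ z in (1:ℝ)..Z, φ z / ω z) ≤ C₁ := by
        have h1 : (∫ z in (1:ℝ)..Z, φ z / ω z) ≤ ∫ z in (1:ℝ)..Z, B / (z + K) := by
          refine intervalIntegral.integral_mono_on hZ1 (hII 1 Z le_rfl hZ1)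
            (hBint 1 Z B le_rfl hZ1) fun x hx => ?_
          have := hup x M hx.1 (hψM x hx.1)
          rwa [hB]
        rw [hIform 1 Z B le_rfl hZ1] at h1
        rwa [hC₁]
      have e2 : (∫ z in Z..lam, φ z / ω z)
          ≤ (A + ε) * (Real.log (lam + K) - Real.log (Z + K)) := by
        have h1 : (∫ z in Z..lam, φ z / ω z) ≤ ∫ z in Z..lam, (A + ε) / (z + K) := by
          refine intervalIntegral.integral_mono_on hcase.le (hII Z lam hZ1 hcase.le)
            (hBint Z lam (A + ε) hZ1 hcase.le) fun x hx => ?_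
          have hx1 : (1:ℝ) ≤ x := le_trans hZ1 hx.1
          have := hup x (ε * σ ^ 2 / 2) hx1 (hZ x hx.1)
          rwa [hAε] at this
        rwa [hIform Z lam (A + ε) hZ1 hcase.le] at h1
      have hlogZ : Real.log (1 + K) ≤ Real.log (Z + K) :=
        Real.log_le_log (by linarith) (by linarith)
      have h4 : (A + ε) * (Real.log (lam + K) - Real.log (Z + K))
          ≤ (A + ε) * (Real.log (lam + K) - Real.log (1 + K)) :=
        mul_le_mul_of_nonneg_left (by linarith) (by linarith)
      linarith
  have h1K : (0:ℝ) < 1 + K := by linarith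
  have hp : (0:ℝ) < (1 + K) ^ A := Real.rpow_pos_of_pos h1K A
  refine ⟨2 / (σ ^ 2 * (1 + K) * (1 + K) ^ A), 2 / σ ^ 2 * Real.exp C₁, by positivity,
    by positivity, fun lam hlam => ⟨?_, ?_⟩⟩
  · -- lower bound
    have hlamK : (0:ℝ) < lam + K := by linarith
    have hωl : 0 < ω lam := hωpos lam hlam.le
    have hexp1 : Real.exp (A * (Real.log (lam + K) - Real.log (1 + K)))
        = (lam + K) ^ A / (1 + K) ^ A := by
      rw [Real.rpow_def_of_pos hlamK, Real.rpow_def_of_pos h1K, ← Real.exp_sub]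
      ring_nf
    have hexp : (lam + K) ^ A / (1 + K) ^ A
        ≤ Real.exp (∫ z in (1:ℝ)..lam, φ z / ω z) := by
      rw [← hexp1]
      exact Real.exp_le_exp.mpr (hIlow lam hlam)
    have hωle : ω lam ≤ σ ^ 2 / 2 * (1 + K) * lam ^ 2 := by
      have h' : lam * (lam + K) ≤ (1 + K) * lam ^ 2 := by
        nlinarith [mul_nonneg hK0.le (mul_nonneg (by linarith : (0:ℝ) ≤ lam)
          (by linarith : (0:ℝ) ≤ lam - 1))]
      calc ω lam = σ ^ 2 / 2 * (lam * (lam + K)) := hωeq lam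
        _ ≤ σ ^ 2 / 2 * ((1 + K) * lam ^ 2) :=
            mul_le_mul_of_nonneg_left h' (by positivity)
        _ = σ ^ 2 / 2 * (1 + K) * lam ^ 2 := by ring
    have hω1 : 2 / (σ ^ 2 * (1 + K) * lam ^ 2) ≤ 1 / ω lam := by
      rw [div_le_div_iff₀ (by positivity) hωl]
      nlinarith
    calc 2 / (σ ^ 2 * (1 + K) * (1 + K) ^ A) * (K + lam) ^ A / lam ^ 2
        = 2 / (σ ^ 2 * (1 + K) * lam ^ 2) * ((lam + K) ^ A / (1 + K) ^ A) := by
          have h2 : lam ≠ 0 := by intro h; rw [h] at hlam; norm_num at hlam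
          rw [add_comm K lam]
          field_simp
      _ ≤ (1 / ω lam) * Real.exp (∫ z in (1:ℝ)..lam, φ z / ω z) :=
          mul_le_mul hω1 hexp (by positivity) (one_div_pos.mpr hωl).le
  · -- upper bound
    have hlamK : (0:ℝ) < lam + K := by linarith
    have hωl : 0 < ω lam := hωpos lam hlam.le
    have hAε0 : (0:ℝ) ≤ A + ε := by linarith
    have hexp1 : Real.exp ((A + ε) * (Real.log (lam + K) - Real.log (1 + K)))
        = (lam + K) ^ (A + ε) / (1 + K) ^ (A + ε) := by
      rw [Real.rpow_def_of_pos hlamK, Real.rpow_def_of_pos h1K, ← Real.exp_sub]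
      ring_nf
    have hone : (1:ℝ) ≤ (1 + K) ^ (A + ε) := by
      calc (1:ℝ) = 1 ^ (A + ε) := (Real.one_rpow _).symm
        _ ≤ (1 + K) ^ (A + ε) := Real.rpow_le_rpow zero_le_one (by linarith) hAε0
    have hexp2 : Real.exp (∫ z in (1:ℝ)..lam, φ z / ω z)
        ≤ Real.exp C₁ * (lam + K) ^ (A + ε) := by
      have h := Real.exp_le_exp.mpr (hIup lam hlam)
      rw [Real.exp_add, hexp1] at h
      refine h.trans ?_
      refine mul_le_mul_of_nonneg_left ?_ (Real.exp_pos C₁).le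
      exact div_le_self (by positivity) hone
    have hωge : σ ^ 2 / 2 * lam ^ 2 ≤ ω lam := by
      rw [hωeq]
      nlinarith [mul_nonneg hσ2.le (mul_nonneg (by linarith : (0:ℝ) ≤ lam) hK0.le)]
    have hω2 : 1 / ω lam ≤ 2 / (σ ^ 2 * lam ^ 2) := by
      rw [div_le_div_iff₀ hωl (by positivity)]
      nlinarith
    calc (1 / ω lam) * Real.exp (∫ z in (1:ℝ)..lam, φ z / ω z)
        ≤ 2 / (σ ^ 2 * lam ^ 2) * (Real.exp C₁ * (lam + K) ^ (A + ε)) :=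
          mul_le_mul hω2 hexp2 (Real.exp_pos _).le (by positivity)
      _ = 2 / σ ^ 2 * Real.exp C₁ * (K + lam) ^ (A + ε) / lam ^ 2 := by
          have h2 : lam ≠ 0 := by intro h; rw [h] at hlam; norm_num at hlam
          rw [add_comm K lam]
          field_simp
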